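/- Let I be a countable set, d : I → ℕ with d(σ) ≥ 1, γ : I → [0,∞), t > s > 0, α = 2t/(s+t). Assume K := ∑_{σ∈I} d(σ)³(1+γ(σ)²)^{−t} < ∞. Let E be a Banach space, and for each σ ∈ I let c(σ,i,j) ∈ E for 1 ≤ i,j ≤ d(σ). If M := (∑_σ d(σ)(1+γ(σ)²)^s ∑_{i,j} ‖c(σ,i,j)‖_E²)^{1/2} < ∞, then (∑_σ d(σ) ∑_{i,j} ‖c(σ,i,j)‖_E^α)^{1/α} ≤ K^{s/(2t)} · M. -/

import Mathlib

open scoped ENNReal BigOperators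

open MeasureTheory in
lemma ennreal_tsum_holder {ι : Type*} {p q : ℝ} (hpq : p.HolderConjugate q)
    (f g : ι → ℝ≥0∞) :
    ∑' i, f i * g i ≤ (∑' i, f i ^ p) ^ (1 / p) * (∑' i, g i ^ q) ^ (1 / q) := by
  letI : MeasurableSpace ι := ⊤
  haveI : MeasurableSingletonClass ι := ⟨fun _ => trivial⟩
  have hf : AEMeasurable f (Measure.count : Measure ι) :=
    (Measurable.of_comap_le le_top).aemeasurable
  have hg : AEMeasurable g (Measure.count : Measure ι) :=
    (Measurable.of_comap_le le_top).aemeasurable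
  have h := ENNReal.lintegral_mul_le_Lp_mul_Lq (Measure.count : Measure ι) hpq hf hg
  simpa [lintegral_count] using h

theorem salpha_bound {I : Type*} [Countable I]
    (d : I → ℕ) (hd : ∀ σ, 1 ≤ d σ) (γ : I → ℝ)
    (s t : ℝ) (hs : 0 < s) (hst : s < t)
    {E : Type*} [NormedAddCommGroup E] [NormedSpace ℂ E] [CompleteSpace E]
    (c : (σ : I) → Fin (d σ) → Fin (d σ) → E)
    (hK : (∑' σ, (d σ : ℝ≥0∞) ^ 3 * ENNReal.ofReal ((1 + γ σ ^ 2) ^ (-t))) ≠ ⊤)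
    (hM : (∑' σ, (d σ : ℝ≥0∞) * ENNReal.ofReal ((1 + γ σ ^ 2) ^ s)
        * ∑ i, ∑ j, ENNReal.ofReal (‖c σ i j‖ ^ 2)) ≠ ⊤) :
    (∑' σ, (d σ : ℝ≥0∞) * ∑ i, ∑ j, ENNReal.ofReal (‖c σ i j‖ ^ (2 * t / (s + t))))
        ^ ((s + t) / (2 * t))
      ≤ (∑' σ, (d σ : ℝ≥0∞) ^ 3 * ENNReal.ofReal ((1 + γ σ ^ 2) ^ (-t))) ^ (s / (2 * t))
        * (∑' σ, (d σ : ℝ≥0∞) * ENNReal.ofReal ((1 + γ σ ^ 2) ^ s)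
            * ∑ i, ∑ j, ENNReal.ofReal (‖c σ i j‖ ^ 2)) ^ ((1 : ℝ) / 2) := by
  have ht : 0 < t := hs.trans hst
  have hstpos : 0 < s + t := by linarith
  set p : ℝ := (s + t) / t with hp
  set q : ℝ := (s + t) / s with hq
  have hp1 : 1 < p := by rw [hp, lt_div_iff₀ ht]; linarith
  have hppos : 0 < p := lt_trans one_pos hp1
  have hqpos : 0 < q := div_pos hstpos hs
  have hpq : p.HolderConjugate q := Real.holderConjugate_iff.mpr ⟨hp1, by rw [hp, hq]; field_simp; ring⟩
  have hpinv : 1 / p = t / (s + t) := by rw [hp]; field_simp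
  have hqinv : 1 / q = s / (s + t) := by rw [hq]; field_simp
  set X : (σ : I) → Fin (d σ) → Fin (d σ) → ℝ≥0∞ :=
    fun σ i j => ENNReal.ofReal (‖c σ i j‖ ^ 2) with hX
  set A : I → ℝ≥0∞ := fun σ => (d σ : ℝ≥0∞) * ENNReal.ofReal ((1 + γ σ ^ 2) ^ s)
      * ∑ i, ∑ j, X σ i j with hA
  set B : I → ℝ≥0∞ := fun σ => (d σ : ℝ≥0∞) ^ 3 * ENNReal.ofReal ((1 + γ σ ^ 2) ^ (-t))
      with hB
  -- per-σ bound
  have key : ∀ σ, (d σ : ℝ≥0∞) * ∑ i, ∑ j, ENNReal.ofReal (‖c σ i j‖ ^ (2 * t / (s + t)))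
      ≤ A σ ^ (1 / p) * B σ ^ (1 / q) := by
    intro σ
    have hdne : (d σ : ℝ≥0∞) ≠ 0 := by
      exact_mod_cast Nat.cast_ne_zero.mpr (Nat.one_le_iff_ne_zero.mp (hd σ))
    have hdtop : (d σ : ℝ≥0∞) ≠ ⊤ := ENNReal.natCast_ne_top _
    have hγpos : (0 : ℝ) < 1 + γ σ ^ 2 := by positivity
    set a : ℝ≥0∞ := ENNReal.ofReal (1 + γ σ ^ 2) with ha
    have hane : a ≠ 0 := by simp [ha, ENNReal.ofReal_eq_zero, not_le, hγpos]
    have hatop : a ≠ ⊤ := ENNReal.ofReal_ne_top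
    set S : ℝ≥0∞ := ∑ i, ∑ j, X σ i j with hS
    -- the α-power terms are (1/p)-powers of the squares
    have hterm : ∀ i j, ENNReal.ofReal (‖c σ i j‖ ^ (2 * t / (s + t))) = X σ i j ^ (1 / p) := by
      intro i j
      show _ = ENNReal.ofReal (‖c σ i j‖ ^ 2) ^ (1 / p)
      rw [ENNReal.ofReal_rpow_of_nonneg (by positivity) (by positivity)]
      congr 1
      rw [show (‖c σ i j‖ ^ 2 : ℝ) = ‖c σ i j‖ ^ ((2 : ℕ) : ℝ) from (Real.rpow_natCast _ 2).symm,
        ← Real.rpow_mul (norm_nonneg _)]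
      congr 1
      rw [hpinv]
      push_cast
      ring
    -- inner Hölder on the finite index set
    have inner : (∑ i, ∑ j, X σ i j ^ (1 / p))
        ≤ S ^ (1 / p) * ((d σ : ℝ≥0∞) ^ (2 : ℝ)) ^ (1 / q) := by
      have h := ennreal_tsum_holder hpq
        (fun z : Fin (d σ) × Fin (d σ) => X σ z.1 z.2 ^ (1 / p))
        (fun _ => (1 : ℝ≥0∞))
      have hpc : ∀ z : Fin (d σ) × Fin (d σ), (X σ z.1 z.2 ^ (1 / p)) ^ p = X σ z.1 z.2 := by
        intro z
        rw [← ENNReal.rpow_mul, one_div, inv_mul_cancel₀ hppos.ne', ENNReal.rpow_one]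
      simp only [mul_one, ENNReal.one_rpow, tsum_fintype, hpc] at h
      have hcard : (∑ _z : Fin (d σ) × Fin (d σ), (1 : ℝ≥0∞)) = (d σ : ℝ≥0∞) ^ (2 : ℝ) := by
        simp only [Finset.sum_const, Finset.card_univ, Fintype.card_prod, Fintype.card_fin,
          nsmul_eq_mul, mul_one]
        rw [show (2 : ℝ) = ((2 : ℕ) : ℝ) by norm_num, ENNReal.rpow_natCast]
        push_cast
        ring
      rw [hcard] at h
      simp only [Fintype.sum_prod_type] at h
      rw [← hS] at h
      exact h
    -- the constants combine correctly
    have e2 : a ^ (s * (1 / p)) * a ^ (-t * (1 / q)) = 1 := by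
      rw [← ENNReal.rpow_add _ _ hane hatop,
        show s * (1 / p) + -t * (1 / q) = 0 by rw [hpinv, hqinv]; field_simp; ring,
        ENNReal.rpow_zero]
    have e1 : (d σ : ℝ≥0∞) * ((d σ : ℝ≥0∞) ^ (2 : ℝ)) ^ (1 / q)
        = (d σ : ℝ≥0∞) ^ (1 / p) * ((d σ : ℝ≥0∞) ^ (3 : ℝ)) ^ (1 / q) := by
      rw [← ENNReal.rpow_mul, ← ENNReal.rpow_mul]
      nth_rewrite 1 [← ENNReal.rpow_one (d σ : ℝ≥0∞)]
      rw [← ENNReal.rpow_add _ _ hdne hdtop, ← ENNReal.rpow_add _ _ hdne hdtop]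
      congr 1
      have := hpq.inv_add_inv_eq_one
      simp only [one_div] at *
      linarith
    have hAs : ENNReal.ofReal ((1 + γ σ ^ 2) ^ s) = a ^ s := by
      rw [ha, ENNReal.ofReal_rpow_of_pos hγpos]
    have hBt : ENNReal.ofReal ((1 + γ σ ^ 2) ^ (-t)) = a ^ (-t) := by
      rw [ha, ENNReal.ofReal_rpow_of_pos hγpos]
    have hd3 : (d σ : ℝ≥0∞) ^ 3 = (d σ : ℝ≥0∞) ^ (3 : ℝ) := by
      rw [show (3 : ℝ) = ((3 : ℕ) : ℝ) by norm_num, ENNReal.rpow_natCast]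
    have const_eq : (d σ : ℝ≥0∞) * (S ^ (1 / p) * ((d σ : ℝ≥0∞) ^ (2 : ℝ)) ^ (1 / q))
        = A σ ^ (1 / p) * B σ ^ (1 / q) := by
      rw [hA, hB]
      simp only [hAs, hBt, hd3, ← hS]
      rw [ENNReal.mul_rpow_of_nonneg _ _ (by positivity : (0:ℝ) ≤ 1/p),
        ENNReal.mul_rpow_of_nonneg _ _ (by positivity : (0:ℝ) ≤ 1/p),
        ENNReal.mul_rpow_of_nonneg _ _ (by positivity : (0:ℝ) ≤ 1/q),
        ← ENNReal.rpow_mul a s, ← ENNReal.rpow_mul a (-t)]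
      calc (d σ : ℝ≥0∞) * (S ^ (1 / p) * ((d σ : ℝ≥0∞) ^ (2 : ℝ)) ^ (1 / q))
          = ((d σ : ℝ≥0∞) * ((d σ : ℝ≥0∞) ^ (2 : ℝ)) ^ (1 / q))
              * (a ^ (s * (1 / p)) * a ^ (-t * (1 / q))) * S ^ (1 / p) := by
            rw [e2]; ring
        _ = ((d σ : ℝ≥0∞) ^ (1 / p) * ((d σ : ℝ≥0∞) ^ (3 : ℝ)) ^ (1 / q))
              * (a ^ (s * (1 / p)) * a ^ (-t * (1 / q))) * S ^ (1 / p) := by rw [e1]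
        _ = (d σ : ℝ≥0∞) ^ (1 / p) * a ^ (s * (1 / p)) * S ^ (1 / p)
              * (((d σ : ℝ≥0∞) ^ (3 : ℝ)) ^ (1 / q) * a ^ (-t * (1 / q))) := by ring
    calc (d σ : ℝ≥0∞) * ∑ i, ∑ j, ENNReal.ofReal (‖c σ i j‖ ^ (2 * t / (s + t)))
        = (d σ : ℝ≥0∞) * ∑ i, ∑ j, X σ i j ^ (1 / p) := by
          simp only [hterm]
      _ ≤ (d σ : ℝ≥0∞) * (S ^ (1 / p) * ((d σ : ℝ≥0∞) ^ (2 : ℝ)) ^ (1 / q)) :=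
          mul_le_mul_right inner _
      _ = A σ ^ (1 / p) * B σ ^ (1 / q) := const_eq
  -- sum over σ and apply Hölder again
  have step2 : (∑' σ, (d σ : ℝ≥0∞) * ∑ i, ∑ j, ENNReal.ofReal (‖c σ i j‖ ^ (2 * t / (s + t))))
      ≤ (∑' σ, A σ) ^ (1 / p) * (∑' σ, B σ) ^ (1 / q) := by
    refine le_trans (ENNReal.tsum_le_tsum key) ?_
    have h := ennreal_tsum_holder hpq (fun σ => A σ ^ (1 / p)) (fun σ => B σ ^ (1 / q))
    have hpc : ∀ σ, (A σ ^ (1 / p)) ^ p = A σ := fun σ => by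
      rw [← ENNReal.rpow_mul, one_div, inv_mul_cancel₀ hppos.ne', ENNReal.rpow_one]
    have hqc : ∀ σ, (B σ ^ (1 / q)) ^ q = B σ := fun σ => by
      rw [← ENNReal.rpow_mul, one_div, inv_mul_cancel₀ hqpos.ne', ENNReal.rpow_one]
    simpa only [hpc, hqc] using h
  -- raise to the power (s+t)/(2t)
  have hrpos : (0 : ℝ) ≤ (s + t) / (2 * t) := by positivity
  have final := ENNReal.rpow_le_rpow step2 hrpos
  rw [ENNReal.mul_rpow_of_nonneg _ _ hrpos, ← ENNReal.rpow_mul, ← ENNReal.rpow_mul] at final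
  rw [show 1 / p * ((s + t) / (2 * t)) = (1 : ℝ) / 2 by rw [hpinv]; field_simp; try ring,
    show 1 / q * ((s + t) / (2 * t)) = s / (2 * t) by rw [hqinv]; field_simp; try ring] at final
  calc (∑' σ, (d σ : ℝ≥0∞) * ∑ i, ∑ j, ENNReal.ofReal (‖c σ i j‖ ^ (2 * t / (s + t))))
        ^ ((s + t) / (2 * t))
      ≤ (∑' σ, A σ) ^ ((1 : ℝ) / 2) * (∑' σ, B σ) ^ (s / (2 * t)) := final
    _ = (∑' σ, B σ) ^ (s / (2 * t)) * (∑' σ, A σ) ^ ((1 : ℝ) / 2) := mul_comm _ _
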